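/- arXiv:1204.2021 — 3 statements merged into one kernel-verified Lean document; each statement's English description precedes it below -/
import Mathlib

section
/- Let G be a finite undirected simple graph in which every vertex has positive degree, let S ⊆ V be nonempty, and let M := (D⁻¹A + I)/2 be the lazy random walk matrix. Then for every integer t ≥ 1, π_S' (I_S M I_S)^t 1_S ≥ (1 − φ(S)/2) · π_S' (I_S M I_S)^{t−1} 1_S, and consequently for every integer t ≥ 0, π_S' (I_S M I_S)^t 1_S ≥ (1 − φ(S)/2)^t. (Equivalently: the expected probability, over a starting vertex v drawn from π_S, that a t-step lazy random walk started at v remains entirely inside S is at least (1 − φ(S)/2)^t.) -/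
open Matrix Finset

set_option linter.unusedSectionVars false
set_option maxHeartbeats 1000000

variable {V : Type*} [Fintype V] [DecidableEq V]

/-- Volume of a set of vertices: sum of degrees. -/
noncomputable def vol (G : SimpleGraph V) [DecidableRel G.Adj] (S : Finset V) : ℝ :=
  ∑ v ∈ S, (G.degree v : ℝ)

/-- Number of edges leaving `S`. -/
noncomputable def cut (G : SimpleGraph V) [DecidableRel G.Adj] (S : Finset V) : ℝ :=
  ∑ u ∈ S, ∑ v ∈ Sᶜ, if G.Adj u v then (1 : ℝ) else 0

/-- Conductance of `S`. -/
noncomputable def conduct (G : SimpleGraph V) [DecidableRel G.Adj] (S : Finset V) : ℝ :=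
  cut G S / vol G S

/-- Lazy random walk matrix `M = (D⁻¹ A + I)/2`. -/
noncomputable def lazy (G : SimpleGraph V) [DecidableRel G.Adj] : Matrix V V ℝ :=
  (2 : ℝ)⁻¹ • (Matrix.diagonal (fun v => ((G.degree v : ℝ))⁻¹) * G.adjMatrix ℝ + 1)

/-- Diagonal 0/1 indicator matrix of `S`. -/
def indMat (S : Finset V) : Matrix V V ℝ :=
  Matrix.diagonal (fun v => if v ∈ S then (1 : ℝ) else 0)

/-- Indicator column vector of `S`. -/
def indVec (S : Finset V) : V → ℝ := fun v => if v ∈ S then (1 : ℝ) else 0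

/-- The distribution `π_S` proportional to degrees on `S`. -/
noncomputable def piVec (G : SimpleGraph V) [DecidableRel G.Adj] (S : Finset V) : V → ℝ :=
  fun v => if v ∈ S then (G.degree v : ℝ) / vol G S else 0

section Aux

variable (G : SimpleGraph V) [DecidableRel G.Adj] (S : Finset V)

/-- Degree-weighted inner product. -/
noncomputable def ip (x y : V → ℝ) : ℝ := ∑ v, (G.degree v : ℝ) * x v * y v

/-- The quantity `⟨1_S, (I_S M I_S)^t 1_S⟩_d`. -/
noncomputable def qq (t : ℕ) : ℝ :=
  ip G (indVec S) (((indMat S * lazy G * indMat S) ^ t).mulVec (indVec S))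

lemma degsum (u : V) : ∑ v, (if G.Adj u v then (1:ℝ) else 0) = (G.degree u : ℝ) := by
  rw [Finset.sum_boole]; norm_cast; rw [← SimpleGraph.neighborFinset_eq_filter]; rfl

lemma adegsum (u : V) : ∑ v, (G.adjMatrix ℝ) u v = (G.degree u : ℝ) := by
  simp only [SimpleGraph.adjMatrix_apply]; exact degsum G u

lemma adj_sym (v u : V) : (G.adjMatrix ℝ) v u = (G.adjMatrix ℝ) u v := by
  simp [SimpleGraph.adjMatrix_apply, G.adj_comm]

lemma lazy_apply (v u : V) :
    lazy G v u = 2⁻¹ * (((G.degree v : ℝ))⁻¹ * (G.adjMatrix ℝ) v u + (if v = u then 1 else 0)) := by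
  simp only [lazy, Matrix.smul_apply, Matrix.add_apply, Matrix.diagonal_mul, Matrix.one_apply,
    smul_eq_mul]

lemma NN_apply (v u : V) :
    (indMat S * lazy G * indMat S) v u
      = (if v ∈ S then (1:ℝ) else 0) * lazy G v u * (if u ∈ S then 1 else 0) := by
  simp [indMat, Matrix.mul_diagonal, Matrix.diagonal_mul]

lemma ip_comm (x y : V → ℝ) : ip G x y = ip G y x :=
  Finset.sum_congr rfl fun v _ => by ring

lemma ip_self_nonneg (x : V → ℝ) : 0 ≤ ip G x x :=
  Finset.sum_nonneg fun v _ => by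
    have : (0:ℝ) ≤ (G.degree v : ℝ) := by positivity
    nlinarith [mul_self_nonneg (x v)]

lemma ip_expand (x y a b : V → ℝ) (r : ℝ) :
    ip G (x + r • y) (a + r • b)
      = ip G x a + r * ip G x b + r * ip G y a + (r * r) * ip G y b := by
  unfold ip
  simp only [Pi.add_apply, Pi.smul_apply, smul_eq_mul, Finset.mul_sum,
    ← Finset.sum_add_distrib]
  exact Finset.sum_congr rfl fun v _ => by ring

lemma ip_mask (x : V → ℝ) :
    ip G x ((indMat S * lazy G * indMat S).mulVec x)
      = ip G (fun v => if v ∈ S then x v else 0)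
          ((lazy G).mulVec (fun v => if v ∈ S then x v else 0)) := by
  unfold ip
  simp only [Matrix.mulVec, dotProduct]
  refine Finset.sum_congr rfl fun v _ => ?_
  have h1 : ∑ u, (indMat S * lazy G * indMat S) v u * x u
      = (if v ∈ S then (1:ℝ) else 0) * ∑ u, lazy G v u * (if u ∈ S then x u else 0) := by
    rw [Finset.mul_sum]
    refine Finset.sum_congr rfl fun u _ => ?_
    rw [NN_apply]
    by_cases hu : u ∈ S <;> by_cases hv : v ∈ S <;> simp [hu, hv] <;> ring
  rw [h1]
  by_cases hv : v ∈ S <;> simp [hv]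

variable (hdeg : ∀ v : V, 0 < G.degree v)
include hdeg

lemma dpos (v : V) : (0:ℝ) < (G.degree v : ℝ) := by exact_mod_cast hdeg v

lemma vol_pos (hS : S.Nonempty) : 0 < vol G S :=
  Finset.sum_pos (fun v _ => dpos G hdeg v) hS

omit hdeg in
lemma cut_nonneg : 0 ≤ cut G S :=
  Finset.sum_nonneg fun u _ => Finset.sum_nonneg fun v _ => by split <;> norm_num

omit hdeg in
lemma cut_le_vol : cut G S ≤ vol G S := by
  unfold cut vol
  refine Finset.sum_le_sum fun u _ => ?_
  calc ∑ v ∈ Sᶜ, (if G.Adj u v then (1:ℝ) else 0)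
      ≤ ∑ v, (if G.Adj u v then (1:ℝ) else 0) :=
        Finset.sum_le_sum_of_subset_of_nonneg (Finset.subset_univ _)
          (fun _ _ _ => by split <;> norm_num)
    _ = (G.degree u : ℝ) := degsum G u

lemma NN_sym (v u : V) :
    (G.degree v : ℝ) * (indMat S * lazy G * indMat S) v u
      = (G.degree u : ℝ) * (indMat S * lazy G * indMat S) u v := by
  rw [NN_apply, NN_apply, lazy_apply, lazy_apply]
  rcases eq_or_ne v u with rfl | h
  · ring
  · rw [if_neg h, if_neg (Ne.symm h), adj_sym]
    have h1 : (G.degree v : ℝ) ≠ 0 := (dpos G hdeg v).ne'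
    have h2 : (G.degree u : ℝ) ≠ 0 := (dpos G hdeg u).ne'
    field_simp
    split_ifs <;> ring

lemma ip_move (x y : V → ℝ) :
    ip G x ((indMat S * lazy G * indMat S).mulVec y)
      = ip G ((indMat S * lazy G * indMat S).mulVec x) y := by
  unfold ip
  simp only [Matrix.mulVec, dotProduct]
  calc ∑ v, (G.degree v : ℝ) * x v * ∑ u, (indMat S * lazy G * indMat S) v u * y u
      = ∑ v, ∑ u, ((G.degree v : ℝ) * (indMat S * lazy G * indMat S) v u) * x v * y u := by
        refine Finset.sum_congr rfl fun v _ => ?_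
        rw [Finset.mul_sum]
        exact Finset.sum_congr rfl fun u _ => by ring
    _ = ∑ v, ∑ u, ((G.degree u : ℝ) * (indMat S * lazy G * indMat S) u v) * x v * y u := by
        refine Finset.sum_congr rfl fun v _ => Finset.sum_congr rfl fun u _ => ?_
        rw [NN_sym G S hdeg]
    _ = ∑ u, ∑ v, ((G.degree u : ℝ) * (indMat S * lazy G * indMat S) u v) * x v * y u :=
        Finset.sum_comm
    _ = ∑ u, (G.degree u : ℝ) * (∑ v, (indMat S * lazy G * indMat S) u v * x v) * y u := by
        refine Finset.sum_congr rfl fun u _ => ?_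
        rw [Finset.mul_sum, Finset.sum_mul]
        exact Finset.sum_congr rfl fun v _ => by ring

lemma ip_lazy (y : V → ℝ) :
    ip G y ((lazy G).mulVec y)
      = 2⁻¹ * ∑ v, (y v * (∑ u, (G.adjMatrix ℝ) v u * y u)
          + (G.degree v : ℝ) * y v * y v) := by
  unfold ip
  rw [Finset.mul_sum]
  refine Finset.sum_congr rfl fun v _ => ?_
  have hv : ((G.degree v : ℝ)) ≠ 0 := (dpos G hdeg v).ne'
  have h1 : ((lazy G).mulVec y) v
      = 2⁻¹ * (((G.degree v : ℝ))⁻¹ * (∑ u, (G.adjMatrix ℝ) v u * y u) + y v) := by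
    simp only [Matrix.mulVec, dotProduct]
    calc ∑ u, lazy G v u * y u
        = ∑ u, (2⁻¹ * (((G.degree v : ℝ))⁻¹ * ((G.adjMatrix ℝ) v u * y u))
            + 2⁻¹ * (if v = u then y u else 0)) := by
          refine Finset.sum_congr rfl fun u _ => ?_
          rw [lazy_apply]; split_ifs <;> ring
      _ = 2⁻¹ * (((G.degree v : ℝ))⁻¹ * (∑ u, (G.adjMatrix ℝ) v u * y u) + y v) := by
          rw [Finset.sum_add_distrib, ← Finset.mul_sum, ← Finset.mul_sum, ← Finset.mul_sum]
          simp [Finset.sum_ite_eq]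
          ring
  rw [h1]
  field_simp

lemma psd_lazy (y : V → ℝ) : 0 ≤ ip G y ((lazy G).mulVec y) := by
  rw [ip_lazy G hdeg y]
  have key : ∑ v, (y v * (∑ u, (G.adjMatrix ℝ) v u * y u) + (G.degree v : ℝ) * y v * y v)
      = 2⁻¹ * ∑ v, ∑ u, (G.adjMatrix ℝ) v u * (y v + y u)^2 := by
    have e1 : ∑ v, ∑ u, (G.adjMatrix ℝ) v u * (y v)^2 = ∑ v, (G.degree v : ℝ) * (y v)^2 := by
      refine Finset.sum_congr rfl fun v _ => ?_
      rw [← Finset.sum_mul, adegsum]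
    have e2 : ∑ v, ∑ u, (G.adjMatrix ℝ) v u * (y u)^2 = ∑ v, (G.degree v : ℝ) * (y v)^2 := by
      rw [Finset.sum_comm]
      refine Finset.sum_congr rfl fun u _ => ?_
      rw [Finset.sum_congr rfl fun v (_ : v ∈ univ) => by rw [adj_sym G v u]]
      rw [← Finset.sum_mul, adegsum]
    have e3 : ∑ v, ∑ u, (G.adjMatrix ℝ) v u * (y v + y u)^2
        = (∑ v, ∑ u, (G.adjMatrix ℝ) v u * (y v)^2)
          + (∑ v, ∑ u, (G.adjMatrix ℝ) v u * (y u)^2)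
          + 2 * ∑ v, ∑ u, (G.adjMatrix ℝ) v u * (y v * y u) := by
      calc ∑ v, ∑ u, (G.adjMatrix ℝ) v u * (y v + y u)^2
          = ∑ v, ∑ u, ((G.adjMatrix ℝ) v u * (y v)^2 + (G.adjMatrix ℝ) v u * (y u)^2
              + 2 * ((G.adjMatrix ℝ) v u * (y v * y u))) :=
            Finset.sum_congr rfl fun v _ => Finset.sum_congr rfl fun u _ => by ring
        _ = _ := by
            simp only [Finset.sum_add_distrib, ← Finset.mul_sum]
    have e4 : ∑ v, (y v * (∑ u, (G.adjMatrix ℝ) v u * y u) + (G.degree v : ℝ) * y v * y v)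
        = (∑ v, ∑ u, (G.adjMatrix ℝ) v u * (y v * y u)) + ∑ v, (G.degree v : ℝ) * (y v)^2 := by
      rw [Finset.sum_add_distrib]
      congr 1
      · refine Finset.sum_congr rfl fun v _ => ?_
        rw [Finset.mul_sum]
        exact Finset.sum_congr rfl fun u _ => by ring
      · exact Finset.sum_congr rfl fun v _ => by ring
    rw [e3, e1, e2, e4]
    ring
  rw [key]
  have hnn : 0 ≤ ∑ v, ∑ u, (G.adjMatrix ℝ) v u * (y v + y u)^2 :=
    Finset.sum_nonneg fun v _ => Finset.sum_nonneg fun u _ =>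
      mul_nonneg (by simp only [SimpleGraph.adjMatrix_apply]; split <;> norm_num) (sq_nonneg _)
  positivity

lemma psd_NN (x : V → ℝ) : 0 ≤ ip G x ((indMat S * lazy G * indMat S).mulVec x) := by
  rw [ip_mask]
  exact psd_lazy G hdeg _

lemma ip_powmove (k : ℕ) (x y : V → ℝ) :
    ip G x (((indMat S * lazy G * indMat S) ^ k).mulVec y)
      = ip G (((indMat S * lazy G * indMat S) ^ k).mulVec x) y := by
  induction k generalizing x y with
  | zero => simp [Matrix.one_mulVec]
  | succ k ih =>
      have h1 : ((indMat S * lazy G * indMat S) ^ (k+1)) *ᵥ y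
          = ((indMat S * lazy G * indMat S) ^ k) *ᵥ ((indMat S * lazy G * indMat S) *ᵥ y) := by
        rw [Matrix.mulVec_mulVec, ← pow_succ]
      have h2 : ((indMat S * lazy G * indMat S) ^ (k+1)) *ᵥ x
          = (indMat S * lazy G * indMat S) *ᵥ (((indMat S * lazy G * indMat S) ^ k) *ᵥ x) := by
        rw [Matrix.mulVec_mulVec, ← pow_succ']
      rw [h1, ih, ip_move G S hdeg, ← h2]

lemma ip_key (a b : ℕ) :
    ip G (((indMat S * lazy G * indMat S) ^ a).mulVec (indVec S))
      (((indMat S * lazy G * indMat S) ^ b).mulVec (indVec S)) = qq G S (a + b) := by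
  unfold qq
  rw [← ip_powmove G S hdeg a, Matrix.mulVec_mulVec, ← pow_add]

lemma qq_nonneg (t : ℕ) : 0 ≤ qq G S t := by
  rcases Nat.even_or_odd t with ⟨s, hs⟩ | ⟨s, hs⟩
  · rw [hs, ← ip_key G S hdeg]
    exact ip_self_nonneg G _
  · have h2 : t = s + (s + 1) := by omega
    rw [h2, ← ip_key G S hdeg]
    have h3 : ((indMat S * lazy G * indMat S) ^ (s+1)).mulVec (indVec S)
        = (indMat S * lazy G * indMat S).mulVec
            (((indMat S * lazy G * indMat S) ^ s).mulVec (indVec S)) := by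
      rw [Matrix.mulVec_mulVec, ← pow_succ']
    rw [h3]
    exact psd_NN G S hdeg _

omit hdeg in
lemma ip_cs (P : Matrix V V ℝ)
    (hsymm : ∀ x y, ip G x (P.mulVec y) = ip G y (P.mulVec x))
    (hpsd : ∀ x, 0 ≤ ip G x (P.mulVec x)) (x y : V → ℝ) :
    (ip G x (P.mulVec y))^2 ≤ ip G x (P.mulVec x) * ip G y (P.mulVec y) := by
  have h : ∀ r : ℝ, 0 ≤ (ip G y (P.mulVec y)) * (r * r)
      + (2 * ip G x (P.mulVec y)) * r + ip G x (P.mulVec x) := by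
    intro r
    have h0 := hpsd (x + r • y)
    rw [Matrix.mulVec_add, Matrix.mulVec_smul, ip_expand] at h0
    have h1 := hsymm y x
    rw [h1] at h0
    ring_nf at h0 ⊢
    linarith
  have hd := discrim_le_zero h
  rw [discrim] at hd
  nlinarith [hd]

lemma qq_cs (t : ℕ) : (qq G S (t+1))^2 ≤ qq G S t * qq G S (t+2) := by
  rcases Nat.even_or_odd t with ⟨s, hs⟩ | ⟨s, hs⟩
  · -- t = s + s : use Cauchy-Schwarz for the plain inner product
    have h := ip_cs G (1 : Matrix V V ℝ)
      (fun x y => by rw [Matrix.one_mulVec, Matrix.one_mulVec]; exact ip_comm G x y)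
      (fun x => by rw [Matrix.one_mulVec]; exact ip_self_nonneg G x)
      (((indMat S * lazy G * indMat S) ^ s).mulVec (indVec S))
      (((indMat S * lazy G * indMat S) ^ (s+1)).mulVec (indVec S))
    simp only [Matrix.one_mulVec] at h
    rw [ip_key G S hdeg, ip_key G S hdeg, ip_key G S hdeg] at h
    have e1 : s + (s+1) = t + 1 := by omega
    have e2 : s + s = t := by omega
    have e3 : (s+1) + (s+1) = t + 2 := by omega
    rw [e1, e2, e3] at h
    exact h
  · -- t = 2s+1 : use Cauchy-Schwarz for the N-form
    have hN : ∀ x y : V → ℝ,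
        ip G x ((indMat S * lazy G * indMat S).mulVec y)
          = ip G y ((indMat S * lazy G * indMat S).mulVec x) := by
      intro x y; rw [ip_move G S hdeg, ip_comm]
    have h := ip_cs G (indMat S * lazy G * indMat S) hN (psd_NN G S hdeg)
      (((indMat S * lazy G * indMat S) ^ s).mulVec (indVec S))
      (((indMat S * lazy G * indMat S) ^ (s+1)).mulVec (indVec S))
    have hmv : ∀ a : ℕ, (indMat S * lazy G * indMat S).mulVec
        (((indMat S * lazy G * indMat S) ^ a).mulVec (indVec S))
        = ((indMat S * lazy G * indMat S) ^ (a+1)).mulVec (indVec S) := by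
      intro a; rw [Matrix.mulVec_mulVec, ← pow_succ']
    rw [hmv s, hmv (s+1)] at h
    rw [ip_key G S hdeg, ip_key G S hdeg, ip_key G S hdeg] at h
    have e1 : s + (s+1+1) = t + 1 := by omega
    have e2 : s + (s+1) = t := by omega
    have e3 : (s+1) + (s+1+1) = t + 2 := by omega
    rw [e1, e2, e3] at h
    exact h
omit hdeg in
lemma qq_zero : qq G S 0 = vol G S := by
  unfold qq ip vol
  rw [pow_zero, Matrix.one_mulVec]
  simp only [indVec, mul_ite, ite_mul, mul_one, mul_zero, one_mul, zero_mul]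
  have hv : ∀ v : V, (if v ∈ S then (if v ∈ S then (G.degree v : ℝ) else 0) else 0)
      = (if v ∈ S then (G.degree v : ℝ) else 0) := fun v => by split <;> simp_all
  rw [Finset.sum_congr rfl fun v _ => hv v, Finset.sum_ite_mem, Finset.univ_inter]

lemma qq_one : qq G S 1 = vol G S - cut G S / 2 := by
  unfold qq
  rw [pow_one, ip_mask]
  have hf : (fun v => if v ∈ S then indVec S v else 0) = indVec S := by
    funext v; by_cases hv : v ∈ S <;> simp [indVec, hv]
  rw [hf, ip_lazy G hdeg]
  have hterm : ∀ v, (indVec S v * (∑ u, (G.adjMatrix ℝ) v u * indVec S u)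
      + (G.degree v : ℝ) * indVec S v * indVec S v)
      = (if v ∈ S then ((∑ u ∈ S, (G.adjMatrix ℝ) v u) + (G.degree v : ℝ)) else 0) := by
    intro v
    by_cases hv : v ∈ S
    · simp only [indVec, if_pos hv, one_mul, mul_one]
      congr 1
      calc ∑ u, (G.adjMatrix ℝ) v u * (if u ∈ S then (1:ℝ) else 0)
          = ∑ u : V, (if u ∈ S then (G.adjMatrix ℝ) v u else 0) := by
            refine Finset.sum_congr rfl fun u _ => ?_
            split <;> simp
        _ = ∑ u ∈ S, (G.adjMatrix ℝ) v u := by rw [Finset.sum_ite_mem, Finset.univ_inter]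
    · simp [indVec, hv]
  rw [Finset.sum_congr rfl fun v (_ : v ∈ univ) => hterm v]
  have hsum : ∑ v, (if v ∈ S then ((∑ u ∈ S, (G.adjMatrix ℝ) v u) + (G.degree v : ℝ)) else 0)
      = 2 * vol G S - cut G S := by
    rw [Finset.sum_ite_mem, Finset.univ_inter]
    have hstep : ∀ v ∈ S, (∑ u ∈ S, (G.adjMatrix ℝ) v u) + (G.degree v : ℝ)
        = 2 * (G.degree v : ℝ) - ∑ u ∈ Sᶜ, (if G.Adj v u then (1:ℝ) else 0) := by
      intro v _
      have h := Finset.sum_add_sum_compl S (fun u => (G.adjMatrix ℝ) v u)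
      rw [adegsum] at h
      simp only [SimpleGraph.adjMatrix_apply] at h ⊢
      linarith
    rw [Finset.sum_congr rfl hstep, Finset.sum_sub_distrib]
    unfold vol cut
    rw [← Finset.mul_sum]
  rw [hsum]
  ring

omit hdeg in
lemma dot_eq (t : ℕ) :
    piVec G S ⬝ᵥ ((indMat S * lazy G * indMat S) ^ t).mulVec (indVec S)
      = qq G S t / vol G S := by
  unfold qq ip dotProduct
  rw [Finset.sum_div]
  refine Finset.sum_congr rfl fun v _ => ?_
  by_cases hv : v ∈ S <;> simp [piVec, indVec, hv] <;> ring

end Aux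

theorem stmt0 (G : SimpleGraph V) [DecidableRel G.Adj]
    (hdeg : ∀ v : V, 0 < G.degree v) (S : Finset V) (hS : S.Nonempty) :
    (∀ t : ℕ, 1 ≤ t →
      piVec G S ⬝ᵥ ((indMat S * lazy G * indMat S) ^ t).mulVec (indVec S) ≥
        (1 - conduct G S / 2) *
          (piVec G S ⬝ᵥ ((indMat S * lazy G * indMat S) ^ (t - 1)).mulVec (indVec S))) ∧
    (∀ t : ℕ,
      piVec G S ⬝ᵥ ((indMat S * lazy G * indMat S) ^ t).mulVec (indVec S) ≥
        (1 - conduct G S / 2) ^ t) := by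
  have hvol : 0 < vol G S := vol_pos G S hdeg hS
  have hcut0 : 0 ≤ cut G S := cut_nonneg G S
  have hcut1 : cut G S ≤ vol G S := cut_le_vol G S
  have hcond : conduct G S ≤ 1 := by
    unfold conduct; rw [div_le_one hvol]; exact hcut1
  have hcond0 : 0 ≤ conduct G S := div_nonneg hcut0 hvol.le
  have hr : 0 < 1 - conduct G S / 2 := by linarith
  have hrec : ∀ t : ℕ, (1 - conduct G S / 2) * qq G S t ≤ qq G S (t + 1) := by
    intro t
    induction t with
    | zero =>
        have h1 : (1 - conduct G S / 2) * qq G S 0 = qq G S 1 := by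
          rw [qq_zero, qq_one G S hdeg]
          unfold conduct
          field_simp
        rw [h1]
    | succ t ih =>
        rcases eq_or_lt_of_le (qq_nonneg G S hdeg t) with h0 | hpos
        · have h1 : qq G S (t+1) = 0 := by
            nlinarith [qq_cs G S hdeg t, qq_nonneg G S hdeg (t+2), sq_nonneg (qq G S (t+1))]
          rw [h1, mul_zero]
          exact qq_nonneg G S hdeg (t+2)
        · have hcs := qq_cs G S hdeg t
          have h2 : 0 ≤ qq G S (t+1) := qq_nonneg G S hdeg (t+1)
          nlinarith [mul_nonneg h2 (sub_nonneg.mpr ih)]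
  have hgeom : ∀ t : ℕ, (1 - conduct G S / 2) ^ t * vol G S ≤ qq G S t := by
    intro t
    induction t with
    | zero => rw [pow_zero, one_mul, qq_zero]
    | succ t ih =>
        calc (1 - conduct G S / 2) ^ (t+1) * vol G S
            = (1 - conduct G S / 2) * ((1 - conduct G S / 2) ^ t * vol G S) := by ring
          _ ≤ (1 - conduct G S / 2) * qq G S t := by
              exact mul_le_mul_of_nonneg_left ih hr.le
          _ ≤ qq G S (t+1) := hrec t
  constructor
  · intro t ht
    obtain ⟨s, rfl⟩ := Nat.exists_eq_add_of_le ht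
    have hts : 1 + s - 1 = s := by omega
    have h1s : 1 + s = s + 1 := by omega
    rw [ge_iff_le, dot_eq, dot_eq, hts, h1s, ← mul_div_assoc]
    exact (div_le_div_iff_of_pos_right hvol).mpr (hrec s)
  · intro t
    rw [ge_iff_le, dot_eq, le_div_iff₀ hvol]
    exact hgeom t
end

section
/- Let G be a finite undirected simple graph in which every vertex has positive degree, let S ⊆ V be nonempty, and let M := (D⁻¹A + I)/2. For every integer t ≥ 0 there exists a subset Sᵗ ⊆ S with μ(Sᵗ) ≥ μ(S)/2 such that every vertex v ∈ Sᵗ satisfies rem(v,t,S) := 1_v'(I_S M I_S)^t 1_S ≥ (1/200)·(1 − 3φ(S)/2)^t. -/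
open Matrix Finset
set_option linter.unusedSectionVars false

variable {V : Type*} [Fintype V] [DecidableEq V]

/-- `rem v t S`: probability that the lazy walk started at `v` stays inside `S`
during its first `t` steps, i.e. `1_v' (I_S M I_S)^t 1_S`. -/
noncomputable def rem (G : SimpleGraph V) [DecidableRel G.Adj] (v : V) (t : ℕ) (S : Finset V) : ℝ :=
  ((indMat S * lazy G * indMat S) ^ t).mulVec (indVec S) v

namespace Stmt1Aux

variable (G : SimpleGraph V) [DecidableRel G.Adj] (S : Finset V)

/-- square root of degree -/
noncomputable def sd (v : V) : ℝ := Real.sqrt ((G.degree v : ℝ))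

/-- the symmetrized walk matrix `D^{1/2} (I_S M I_S) D^{-1/2}` -/
noncomputable def Wmat : Matrix V V ℝ :=
  Matrix.of fun u v => if u ∈ S ∧ v ∈ S then
    (2:ℝ)⁻¹ * ((G.adjMatrix ℝ) u v / (sd G u * sd G v) + if u = v then 1 else 0) else 0

/-- `√degree`-weighted indicator vector -/
noncomputable def xind (B : Finset V) : V → ℝ := fun v => if v ∈ B then sd G v else 0

noncomputable abbrev Nmat : Matrix V V ℝ := indMat S * lazy G * indMat S


lemma degR_pos (hdeg : ∀ v : V, 0 < G.degree v) (v : V) : (0:ℝ) < (G.degree v : ℝ) := by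
  exact_mod_cast hdeg v

lemma sd_pos (hdeg : ∀ v : V, 0 < G.degree v) (v : V) : 0 < sd G v :=
  Real.sqrt_pos.2 (degR_pos G hdeg v)

lemma sd_mul_self (hdeg : ∀ v : V, 0 < G.degree v) (v : V) :
    sd G v * sd G v = (G.degree v : ℝ) :=
  Real.mul_self_sqrt (le_of_lt (degR_pos G hdeg v))

lemma adj_row_sum (u : V) : ∑ v, (G.adjMatrix ℝ) u v = (G.degree u : ℝ) := by
  rw [SimpleGraph.degree, SimpleGraph.neighborFinset_eq_filter]
  simp [SimpleGraph.adjMatrix_apply, Finset.sum_boole]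

lemma adj_nonneg (u v : V) : (0:ℝ) ≤ (G.adjMatrix ℝ) u v := by
  rw [SimpleGraph.adjMatrix_apply]; positivity

lemma adj_symm (u v : V) : (G.adjMatrix ℝ) u v = (G.adjMatrix ℝ) v u := by
  simp [SimpleGraph.adjMatrix_apply, SimpleGraph.adj_comm]

lemma Nmat_apply (u v : V) :
    Nmat G S u v = if u ∈ S ∧ v ∈ S then
      (2:ℝ)⁻¹ * (((G.degree u : ℝ))⁻¹ * (G.adjMatrix ℝ) u v + if u = v then 1 else 0) else 0 := by
  show (indMat S * lazy G * indMat S) u v = _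
  rw [indMat, Matrix.mul_diagonal, Matrix.diagonal_mul, lazy]
  simp only [Matrix.smul_apply, Matrix.add_apply, Matrix.diagonal_mul, Matrix.one_apply,
    smul_eq_mul]
  by_cases hu : u ∈ S <;> by_cases hv : v ∈ S <;> simp [hu, hv]

lemma Wmat_apply (u v : V) : Wmat G S u v = if u ∈ S ∧ v ∈ S then
    (2:ℝ)⁻¹ * ((G.adjMatrix ℝ) u v / (sd G u * sd G v) + if u = v then 1 else 0) else 0 := rfl

lemma Wmat_nonneg (hdeg : ∀ v : V, 0 < G.degree v) (u v : V) : 0 ≤ Wmat G S u v := by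
  rw [Wmat_apply]
  split
  · have h1 := adj_nonneg G u v
    have h2 := sd_pos G hdeg u
    have h3 := sd_pos G hdeg v
    apply mul_nonneg (by norm_num)
    apply add_nonneg (div_nonneg h1 (by positivity))
    split <;> norm_num
  · exact le_refl _

lemma Wmat_symm (u v : V) : Wmat G S u v = Wmat G S v u := by
  rw [Wmat_apply, Wmat_apply, adj_symm]
  by_cases h : u ∈ S ∧ v ∈ S
  · have h' : v ∈ S ∧ u ∈ S := ⟨h.2, h.1⟩
    simp only [h, h', if_true]
    by_cases huv : u = v
    · subst huv; ring
    · have hvu : ¬ v = u := fun hh => huv hh.symm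
      simp only [huv, hvu, if_false]
      ring
  · have h' : ¬ (v ∈ S ∧ u ∈ S) := fun hh => h ⟨hh.2, hh.1⟩
    simp [h, h']

lemma Wpow_nonneg (hdeg : ∀ v : V, 0 < G.degree v) (t : ℕ) (u v : V) :
    0 ≤ ((Wmat G S) ^ t) u v := by
  induction t generalizing u v with
  | zero => rw [pow_zero, Matrix.one_apply]; split <;> norm_num
  | succ t ih =>
    rw [pow_succ, Matrix.mul_apply]
    exact Finset.sum_nonneg fun k _ => mul_nonneg (ih u k) (Wmat_nonneg G S hdeg k v)

lemma DhN_eq_WDh (hdeg : ∀ v : V, 0 < G.degree v) :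
    Matrix.diagonal (sd G) * Nmat G S = Wmat G S * Matrix.diagonal (sd G) := by
  ext u v
  rw [Matrix.diagonal_mul, Matrix.mul_diagonal, Nmat_apply, Wmat_apply]
  by_cases h : u ∈ S ∧ v ∈ S
  · simp only [h, if_true]
    have hdu : sd G u * sd G u = (G.degree u : ℝ) := sd_mul_self G hdeg u
    have h2 := sd_pos G hdeg u
    have h3 := sd_pos G hdeg v
    by_cases huv : u = v
    · subst huv
      simp only [if_pos rfl, SimpleGraph.adjMatrix_apply, if_neg (G.irrefl (v := u))]
      rw [← hdu]
      field_simp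
    · simp only [huv, if_false, and_self, if_true]
      rw [← hdu]
      field_simp
      ring
  · simp [h]

lemma DhNpow (hdeg : ∀ v : V, 0 < G.degree v) (t : ℕ) :
    Matrix.diagonal (sd G) * (Nmat G S) ^ t = (Wmat G S) ^ t * Matrix.diagonal (sd G) := by
  induction t with
  | zero => simp
  | succ t ih =>
    rw [pow_succ, pow_succ, ← Matrix.mul_assoc, ih, Matrix.mul_assoc, DhN_eq_WDh G S hdeg,
      ← Matrix.mul_assoc]

lemma Wpow_mulVec_x (hdeg : ∀ v : V, 0 < G.degree v) (t : ℕ) (v : V) :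
    (((Wmat G S) ^ t) *ᵥ (xind G S)) v = sd G v * rem G v t S := by
  have hx : xind G S = (Matrix.diagonal (sd G)) *ᵥ indVec S := by
    funext w
    rw [Matrix.mulVec_diagonal]
    simp only [xind, indVec, mul_ite, mul_one, mul_zero]
  rw [hx, Matrix.mulVec_mulVec, ← DhNpow G S hdeg t, ← Matrix.mulVec_mulVec,
    Matrix.mulVec_diagonal]
  rfl

lemma Nmat_nonneg (u v : V) : 0 ≤ Nmat G S u v := by
  rw [Nmat_apply]
  split
  · apply mul_nonneg (by norm_num)
    apply add_nonneg (mul_nonneg (inv_nonneg.2 (Nat.cast_nonneg _)) (adj_nonneg G u v))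
    split <;> norm_num
  · exact le_refl _

lemma rem_zero (v : V) : rem G v 0 S = indVec S v := by
  rw [rem, pow_zero, Matrix.one_mulVec]

lemma rem_succ (t : ℕ) (v : V) :
    rem G v (t + 1) S = ∑ u, Nmat G S v u * rem G u t S := by
  rw [rem, pow_succ', ← Matrix.mulVec_mulVec]
  rfl

lemma rem_nonneg (t : ℕ) (v : V) : 0 ≤ rem G v t S := by
  induction t generalizing v with
  | zero => rw [rem_zero, indVec]; split <;> norm_num
  | succ t ih =>
    rw [rem_succ]
    exact Finset.sum_nonneg fun u _ => mul_nonneg (Nmat_nonneg G S v u) (ih u)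

lemma Nmat_diag (v : V) (hv : v ∈ S) : Nmat G S v v = 2⁻¹ := by
  rw [Nmat_apply]
  simp [hv, SimpleGraph.adjMatrix_apply, G.irrefl]

lemma rem_ge_half_pow (t : ℕ) (v : V) (hv : v ∈ S) : (2:ℝ)⁻¹ ^ t ≤ rem G v t S := by
  induction t generalizing v with
  | zero => rw [pow_zero, rem_zero]; simp [indVec, hv]
  | succ t ih =>
    rw [rem_succ, pow_succ]
    calc (2:ℝ)⁻¹ ^ t * 2⁻¹ ≤ rem G v t S * 2⁻¹ := by
          apply mul_le_mul_of_nonneg_right (ih v hv) (by norm_num)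
      _ = Nmat G S v v * rem G v t S := by rw [Nmat_diag G S v hv, mul_comm]
      _ ≤ ∑ u, Nmat G S v u * rem G u t S := by
          apply Finset.single_le_sum (f := fun u => Nmat G S v u * rem G u t S)
            (fun u _ => mul_nonneg (Nmat_nonneg G S v u) (rem_nonneg G S t u)) (Finset.mem_univ v)

lemma Nmat_row_sum_one (hdeg : ∀ v : V, 0 < G.degree v) (hcut : cut G S = 0) (v : V)
    (hv : v ∈ S) : ∑ u, Nmat G S v u = 1 := by
  have hout : ∑ u ∈ Sᶜ, (G.adjMatrix ℝ) v u = 0 := by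
    have h1 : ∀ w ∈ S, (0:ℝ) ≤ ∑ u ∈ Sᶜ, if G.Adj w u then (1:ℝ) else 0 := by
      intro w _
      exact Finset.sum_nonneg fun u _ => by split <;> norm_num
    have h2 := (Finset.sum_eq_zero_iff_of_nonneg h1).1 hcut v hv
    simpa [SimpleGraph.adjMatrix_apply] using h2
  have hin : ∑ u ∈ S, (G.adjMatrix ℝ) v u = (G.degree v : ℝ) := by
    have := Finset.sum_add_sum_compl S (fun u => (G.adjMatrix ℝ) v u)
    rw [hout, add_zero, adj_row_sum] at this
    exact this
  have hstep : ∑ u, Nmat G S v u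
      = ∑ u ∈ S, (2:ℝ)⁻¹ * (((G.degree v : ℝ))⁻¹ * (G.adjMatrix ℝ) v u + if v = u then 1 else 0) := by
    rw [← Finset.sum_subset (Finset.subset_univ S)]
    · apply Finset.sum_congr rfl
      intro u hu
      rw [Nmat_apply]
      simp [hv, hu]
    · intro u _ hu
      rw [Nmat_apply]
      simp [hu]
  rw [hstep]
  rw [Finset.sum_congr rfl (fun u _ => mul_add ((2:ℝ)⁻¹) _ _), Finset.sum_add_distrib]
  rw [← Finset.mul_sum, ← Finset.mul_sum, ← Finset.mul_sum, hin, Finset.sum_ite_eq, if_pos hv]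
  have : ((G.degree v : ℝ))⁻¹ * (G.degree v : ℝ) = 1 :=
    inv_mul_cancel₀ (ne_of_gt (degR_pos G hdeg v))
  rw [this]
  norm_num

lemma rem_eq_one_of_cut_zero (hdeg : ∀ v : V, 0 < G.degree v) (hcut : cut G S = 0) (t : ℕ) :
    ∀ v ∈ S, rem G v t S = 1 := by
  induction t with
  | zero => intro v hv; rw [rem_zero, indVec]; simp [hv]
  | succ t ih =>
    intro v hv
    rw [rem_succ]
    have : ∀ u ∈ Finset.univ, Nmat G S v u * rem G u t S = Nmat G S v u := by
      intro u _
      by_cases hu : u ∈ S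
      · rw [ih u hu, mul_one]
      · have : Nmat G S v u = 0 := by rw [Nmat_apply]; simp [hu]
        rw [this, zero_mul]
    rw [Finset.sum_congr rfl this, Nmat_row_sum_one G S hdeg hcut v hv]

lemma dot_W_eq (f : V → ℝ) :
    f ⬝ᵥ (Wmat G S *ᵥ f) =
      2⁻¹ * ((∑ v ∈ S, f v ^ 2) +
        ∑ u ∈ S, ∑ v ∈ S, (G.adjMatrix ℝ) u v * (f u / sd G u) * (f v / sd G v)) := by
  have hL : f ⬝ᵥ (Wmat G S *ᵥ f) = ∑ u, ∑ v, f u * (Wmat G S u v * f v) := by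
    simp [dotProduct, Matrix.mulVec, Finset.mul_sum]
  have hvan2 : ∀ u : V, ∀ v ∈ Finset.univ, v ∉ S → f u * (Wmat G S u v * f v) = 0 := by
    intro u v _ hv
    rw [Wmat_apply]
    simp [hv]
  have hvan1 : ∀ u ∈ Finset.univ, u ∉ S → ∑ v, f u * (Wmat G S u v * f v) = 0 := by
    intro u _ hu
    apply Finset.sum_eq_zero
    intro v _
    rw [Wmat_apply]
    simp [hu]
  have huniv : (∑ u, ∑ v, f u * (Wmat G S u v * f v))
      = ∑ u ∈ S, ∑ v ∈ S, f u * (Wmat G S u v * f v) := by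
    rw [← Finset.sum_subset (Finset.subset_univ S) hvan1]
    apply Finset.sum_congr rfl
    intro u _
    exact (Finset.sum_subset (Finset.subset_univ S) (hvan2 u)).symm
  have hkey : ∀ u ∈ S, ∀ v ∈ S, f u * (Wmat G S u v * f v)
      = 2⁻¹ * ((G.adjMatrix ℝ) u v * (f u / sd G u) * (f v / sd G v))
        + 2⁻¹ * (if u = v then f u * f v else 0) := by
    intro u hu v hv
    rw [Wmat_apply, if_pos ⟨hu, hv⟩]
    split_ifs with h <;> ring
  rw [hL, huniv]
  rw [Finset.sum_congr rfl (fun u hu => Finset.sum_congr rfl (fun v hv => hkey u hu v hv))]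
  have hdiag : ∀ u ∈ S, ∑ v ∈ S, (if u = v then f u * f v else 0) = f u ^ 2 := by
    intro u hu
    rw [Finset.sum_ite_eq S u (fun v => f u * f v), if_pos hu, sq]
  have e1 : ∀ F : V → V → ℝ, ∑ u ∈ S, ∑ v ∈ S, 2⁻¹ * F u v
      = 2⁻¹ * ∑ u ∈ S, ∑ v ∈ S, F u v := by
    intro F
    rw [Finset.mul_sum]
    exact Finset.sum_congr rfl fun u _ => by rw [Finset.mul_sum]
  have : ∑ u ∈ S, ∑ v ∈ S,
      (2⁻¹ * ((G.adjMatrix ℝ) u v * (f u / sd G u) * (f v / sd G v))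
        + 2⁻¹ * (if u = v then f u * f v else 0))
      = 2⁻¹ * (∑ u ∈ S, ∑ v ∈ S, (G.adjMatrix ℝ) u v * (f u / sd G u) * (f v / sd G v))
        + 2⁻¹ * (∑ u ∈ S, f u ^ 2) := by
    rw [Finset.sum_congr rfl (fun u _ => Finset.sum_add_distrib), Finset.sum_add_distrib]
    congr 1
    · exact e1 _
    · rw [e1 (fun u v => if u = v then f u * f v else 0)]
      congr 1
      exact Finset.sum_congr rfl hdiag
  rw [this]
  ring

lemma cross_abs_le (hdeg : ∀ v : V, 0 < G.degree v) (f : V → ℝ) :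
    |∑ u ∈ S, ∑ v ∈ S, (G.adjMatrix ℝ) u v * (f u / sd G u) * (f v / sd G v)|
      ≤ ∑ v ∈ S, f v ^ 2 := by
  set g : V → ℝ := fun v => f v / sd G v with hg
  have habs : |∑ u ∈ S, ∑ v ∈ S, (G.adjMatrix ℝ) u v * g u * g v|
      ≤ ∑ u ∈ S, ∑ v ∈ S, (G.adjMatrix ℝ) u v * ((g u ^ 2 + g v ^ 2) / 2) := by
    calc |∑ u ∈ S, ∑ v ∈ S, (G.adjMatrix ℝ) u v * g u * g v|
        ≤ ∑ u ∈ S, |∑ v ∈ S, (G.adjMatrix ℝ) u v * g u * g v| :=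
          Finset.abs_sum_le_sum_abs _ _
      _ ≤ ∑ u ∈ S, ∑ v ∈ S, |(G.adjMatrix ℝ) u v * g u * g v| :=
          Finset.sum_le_sum fun u _ => Finset.abs_sum_le_sum_abs _ _
      _ ≤ ∑ u ∈ S, ∑ v ∈ S, (G.adjMatrix ℝ) u v * ((g u ^ 2 + g v ^ 2) / 2) := by
          apply Finset.sum_le_sum
          intro u _
          apply Finset.sum_le_sum
          intro v _
          have hA := adj_nonneg G u v
          rw [abs_mul, abs_mul, abs_of_nonneg hA]
          rw [mul_assoc]
          apply mul_le_mul_of_nonneg_left _ hA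
          nlinarith [sq_nonneg (|g u| - |g v|), sq_abs (g u), sq_abs (g v), abs_nonneg (g u),
            abs_nonneg (g v)]
  have hsym : ∑ u ∈ S, ∑ v ∈ S, (G.adjMatrix ℝ) u v * ((g u ^ 2 + g v ^ 2) / 2)
      = ∑ u ∈ S, g u ^ 2 * (∑ v ∈ S, (G.adjMatrix ℝ) u v) := by
    have h1 : ∀ u ∈ S, ∑ v ∈ S, (G.adjMatrix ℝ) u v * ((g u ^ 2 + g v ^ 2) / 2)
        = ∑ v ∈ S, ((G.adjMatrix ℝ) u v * g u ^ 2 / 2 + (G.adjMatrix ℝ) u v * g v ^ 2 / 2) := by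
      intro u _
      apply Finset.sum_congr rfl
      intro v _
      ring
    rw [Finset.sum_congr rfl h1]
    rw [Finset.sum_congr rfl (fun u _ => Finset.sum_add_distrib), Finset.sum_add_distrib]
    have h2 : ∑ u ∈ S, ∑ v ∈ S, (G.adjMatrix ℝ) u v * g v ^ 2 / 2
        = ∑ u ∈ S, ∑ v ∈ S, (G.adjMatrix ℝ) u v * g u ^ 2 / 2 := by
      rw [Finset.sum_comm]
      apply Finset.sum_congr rfl
      intro u _
      apply Finset.sum_congr rfl
      intro v _
      rw [adj_symm]
    rw [h2]
    rw [← Finset.sum_add_distrib]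
    apply Finset.sum_congr rfl
    intro u _
    rw [Finset.mul_sum]
    rw [← Finset.sum_add_distrib]
    apply Finset.sum_congr rfl
    intro v _
    ring
  have hrow : ∀ u ∈ S, g u ^ 2 * (∑ v ∈ S, (G.adjMatrix ℝ) u v) ≤ f u ^ 2 := by
    intro u hu
    have hle : ∑ v ∈ S, (G.adjMatrix ℝ) u v ≤ (G.degree u : ℝ) := by
      rw [← adj_row_sum G u]
      exact Finset.sum_le_sum_of_subset_of_nonneg (Finset.subset_univ S)
        (fun v _ _ => adj_nonneg G u v)
    have hgd : g u ^ 2 * (G.degree u : ℝ) = f u ^ 2 := by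
      have hsd := sd_pos G hdeg u
      have hdd := sd_mul_self G hdeg u
      have hne : sd G u ≠ 0 := ne_of_gt hsd
      show (f u / sd G u) ^ 2 * (G.degree u : ℝ) = f u ^ 2
      rw [← hdd, ← sq, div_pow, div_mul_cancel₀ _ (pow_ne_zero 2 hne)]
    calc g u ^ 2 * (∑ v ∈ S, (G.adjMatrix ℝ) u v) ≤ g u ^ 2 * (G.degree u : ℝ) :=
          mul_le_mul_of_nonneg_left hle (sq_nonneg _)
      _ = f u ^ 2 := hgd
  calc |∑ u ∈ S, ∑ v ∈ S, (G.adjMatrix ℝ) u v * g u * g v|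
      ≤ ∑ u ∈ S, ∑ v ∈ S, (G.adjMatrix ℝ) u v * ((g u ^ 2 + g v ^ 2) / 2) := habs
    _ = ∑ u ∈ S, g u ^ 2 * (∑ v ∈ S, (G.adjMatrix ℝ) u v) := hsym
    _ ≤ ∑ u ∈ S, f u ^ 2 := Finset.sum_le_sum hrow

lemma dot_W_nonneg (hdeg : ∀ v : V, 0 < G.degree v) (f : V → ℝ) :
    0 ≤ f ⬝ᵥ (Wmat G S *ᵥ f) := by
  rw [dot_W_eq]
  have h := cross_abs_le G S hdeg f
  have h2 := neg_abs_le (∑ u ∈ S, ∑ v ∈ S, (G.adjMatrix ℝ) u v * (f u / sd G u) * (f v / sd G v))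
  linarith

lemma dot_W_le (hdeg : ∀ v : V, 0 < G.degree v) (f : V → ℝ) :
    f ⬝ᵥ (Wmat G S *ᵥ f) ≤ ∑ v, f v ^ 2 := by
  rw [dot_W_eq]
  have h := cross_abs_le G S hdeg f
  have h2 := le_abs_self (∑ u ∈ S, ∑ v ∈ S, (G.adjMatrix ℝ) u v * (f u / sd G u) * (f v / sd G v))
  have h3 : ∑ v ∈ S, f v ^ 2 ≤ ∑ v, f v ^ 2 :=
    Finset.sum_le_sum_of_subset_of_nonneg (Finset.subset_univ S) (fun v _ _ => sq_nonneg _)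
  linarith

lemma xS_dot_W_xS (hdeg : ∀ v : V, 0 < G.degree v) :
    (xind G S) ⬝ᵥ (Wmat G S *ᵥ (xind G S)) = vol G S - cut G S / 2 := by
  rw [dot_W_eq]
  have h1 : ∑ v ∈ S, (xind G S v) ^ 2 = vol G S := by
    apply Finset.sum_congr rfl
    intro v hv
    rw [xind, if_pos hv, sq, sd_mul_self G hdeg v]
  have h2 : ∑ u ∈ S, ∑ v ∈ S, (G.adjMatrix ℝ) u v * (xind G S u / sd G u) * (xind G S v / sd G v)
      = vol G S - cut G S := by
    have hterm : ∀ u ∈ S, ∀ v ∈ S,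
        (G.adjMatrix ℝ) u v * (xind G S u / sd G u) * (xind G S v / sd G v)
          = (G.adjMatrix ℝ) u v := by
      intro u hu v hv
      rw [xind, xind, if_pos hu, if_pos hv, div_self (ne_of_gt (sd_pos G hdeg u)),
        div_self (ne_of_gt (sd_pos G hdeg v)), mul_one, mul_one]
    rw [Finset.sum_congr rfl (fun u hu => Finset.sum_congr rfl (fun v hv => hterm u hu v hv))]
    have hsplit : ∀ u ∈ S, ∑ v ∈ S, (G.adjMatrix ℝ) u v
        = (G.degree u : ℝ) - ∑ v ∈ Sᶜ, (G.adjMatrix ℝ) u v := by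
      intro u _
      have := Finset.sum_add_sum_compl S (fun v => (G.adjMatrix ℝ) u v)
      rw [← adj_row_sum G u]
      linarith
    rw [Finset.sum_congr rfl hsplit, Finset.sum_sub_distrib]
    have hcut : ∑ u ∈ S, ∑ v ∈ Sᶜ, (G.adjMatrix ℝ) u v = cut G S := by
      rw [cut]
      apply Finset.sum_congr rfl
      intro u _
      apply Finset.sum_congr rfl
      intro v _
      rw [SimpleGraph.adjMatrix_apply]
    rw [hcut, vol]
  rw [h1, h2]
  ring

lemma Wmat_isHermitian : (Wmat G S).IsHermitian := by
  unfold Matrix.IsHermitian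
  ext u v
  rw [Matrix.conjTranspose_apply, star_trivial, Wmat_symm G S v u]

/-- eigenvalues of `Wmat` -/
noncomputable def ev (i : V) : ℝ := (Wmat_isHermitian G S).eigenvalues i

/-- eigenvectors of `Wmat` -/
noncomputable def evec (i : V) : V → ℝ := (Wmat_isHermitian G S).eigenvectorBasis i

/-- coefficients in the eigenbasis -/
noncomputable def coeff (f : V → ℝ) (i : V) : ℝ := ∑ v, evec G S i v * f v

lemma W_mulVec_evec (i : V) : Wmat G S *ᵥ evec G S i = ev G S i • evec G S i :=
  (Wmat_isHermitian G S).mulVec_eigenvectorBasis i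

lemma Wpow_mulVec_evec (s : ℕ) (i : V) :
    (Wmat G S) ^ s *ᵥ evec G S i = (ev G S i ^ s) • evec G S i := by
  induction s with
  | zero => rw [pow_zero, pow_zero, Matrix.one_mulVec, one_smul]
  | succ s ih =>
    rw [pow_succ', ← Matrix.mulVec_mulVec, ih, Matrix.mulVec_smul, W_mulVec_evec,
      smul_smul, ← pow_succ]

lemma evec_sq_sum (i : V) : ∑ v, evec G S i v ^ 2 = 1 := by
  have h := orthonormal_iff_ite.mp (Wmat_isHermitian G S).eigenvectorBasis.orthonormal i i
  rw [if_pos rfl] at h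
  rw [PiLp.inner_apply] at h
  simp only [RCLike.inner_apply, starRingEnd_apply, star_trivial] at h
  calc ∑ v, evec G S i v ^ 2 = ∑ v, evec G S i v * evec G S i v := by
        apply Finset.sum_congr rfl; intro v _; rw [sq]
    _ = 1 := h

lemma sum_coeff_smul (f : V → ℝ) (v : V) : ∑ i, coeff G S f i * evec G S i v = f v := by
  have h := (Wmat_isHermitian G S).eigenvectorBasis.sum_repr'
    (WithLp.toLp 2 f : EuclideanSpace ℝ V)
  have h2 : ∀ i : V, (inner ℝ ((Wmat_isHermitian G S).eigenvectorBasis i)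
      (WithLp.toLp 2 f : EuclideanSpace ℝ V) : ℝ) = coeff G S f i := by
    intro i
    rw [PiLp.inner_apply]
    simp only [RCLike.inner_apply, starRingEnd_apply, star_trivial]
    exact Finset.sum_congr rfl fun v _ => mul_comm _ _
  have h3 := congrFun (congrArg (fun z : EuclideanSpace ℝ V => (WithLp.ofLp z : V → ℝ)) h) v
  simp only [WithLp.ofLp_toLp, WithLp.ofLp_sum] at h3
  rw [← h3]
  rw [Finset.sum_apply]
  apply Finset.sum_congr rfl
  intro i _
  rw [h2 i]
  rfl

lemma dot_Wpow (s : ℕ) (f g : V → ℝ) :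
    f ⬝ᵥ ((Wmat G S) ^ s *ᵥ g) = ∑ i, ev G S i ^ s * (coeff G S f i * coeff G S g i) := by
  have hmv : ∀ v, ((Wmat G S) ^ s *ᵥ g) v
      = ∑ i, coeff G S g i * (ev G S i ^ s * evec G S i v) := by
    intro v
    have hstep : ((Wmat G S) ^ s *ᵥ g) v = ∑ u, ((Wmat G S) ^ s) v u * g u := rfl
    rw [hstep]
    have hgu : ∀ u, ((Wmat G S) ^ s) v u * g u
        = ∑ i, coeff G S g i * (((Wmat G S) ^ s) v u * evec G S i u) := by
      intro u
      rw [← sum_coeff_smul G S g u, Finset.mul_sum]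
      apply Finset.sum_congr rfl
      intro i _
      ring
    rw [Finset.sum_congr rfl (fun u _ => hgu u), Finset.sum_comm]
    apply Finset.sum_congr rfl
    intro i _
    rw [← Finset.mul_sum]
    congr 1
    have : ∑ u, ((Wmat G S) ^ s) v u * evec G S i u = ((Wmat G S) ^ s *ᵥ evec G S i) v := rfl
    rw [this, Wpow_mulVec_evec]
    rfl
  rw [dotProduct]
  rw [Finset.sum_congr rfl (fun v _ => by rw [hmv v, Finset.mul_sum])]
  rw [Finset.sum_comm]
  apply Finset.sum_congr rfl
  intro i _
  calc ∑ v, f v * (coeff G S g i * (ev G S i ^ s * evec G S i v))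
      = ev G S i ^ s * coeff G S g i * ∑ v, evec G S i v * f v := by
        rw [Finset.mul_sum]
        apply Finset.sum_congr rfl
        intro v _
        ring
    _ = ev G S i ^ s * (coeff G S f i * coeff G S g i) := by
        rw [show (∑ v, evec G S i v * f v) = coeff G S f i from rfl]
        ring

lemma dot_eq_sum_coeff (f g : V → ℝ) :
    f ⬝ᵥ g = ∑ i, coeff G S f i * coeff G S g i := by
  have h := dot_Wpow G S 0 f g
  rw [pow_zero, Matrix.one_mulVec] at h
  rw [h]
  apply Finset.sum_congr rfl
  intro i _
  rw [pow_zero, one_mul]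

lemma ev_eq_dot (i : V) : ev G S i = evec G S i ⬝ᵥ (Wmat G S *ᵥ evec G S i) := by
  rw [W_mulVec_evec]
  rw [dotProduct_smul]
  have : evec G S i ⬝ᵥ evec G S i = 1 := by
    rw [dotProduct]
    rw [← evec_sq_sum G S i]
    apply Finset.sum_congr rfl
    intro v _
    rw [sq]
  rw [this]
  simp

lemma ev_nonneg (hdeg : ∀ v : V, 0 < G.degree v) (i : V) : 0 ≤ ev G S i := by
  rw [ev_eq_dot]
  exact dot_W_nonneg G S hdeg _

lemma ev_le_one (hdeg : ∀ v : V, 0 < G.degree v) (i : V) : ev G S i ≤ 1 := by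
  rw [ev_eq_dot]
  calc evec G S i ⬝ᵥ (Wmat G S *ᵥ evec G S i) ≤ ∑ v, evec G S i v ^ 2 := dot_W_le G S hdeg _
    _ = 1 := evec_sq_sum G S i

lemma vol_nonneg' (A : Finset V) : 0 ≤ vol G A :=
  Finset.sum_nonneg fun v _ => Nat.cast_nonneg _

lemma vol_mono' {A B : Finset V} (h : A ⊆ B) : vol G A ≤ vol G B :=
  Finset.sum_le_sum_of_subset_of_nonneg h fun v _ _ => Nat.cast_nonneg _

lemma vol_pos' (hdeg : ∀ v : V, 0 < G.degree v) (hS : S.Nonempty) : 0 < vol G S := by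
  obtain ⟨v, hv⟩ := hS
  have h1 : (0:ℝ) < (G.degree v : ℝ) := degR_pos G hdeg v
  have h2 : (G.degree v : ℝ) ≤ vol G S := by
    apply Finset.single_le_sum (f := fun u => (G.degree u : ℝ)) (fun u _ => Nat.cast_nonneg _) hv
  linarith

lemma cut_nonneg' : 0 ≤ cut G S := by
  apply Finset.sum_nonneg
  intro u _
  apply Finset.sum_nonneg
  intro v _
  split <;> norm_num

lemma cut_le_vol' : cut G S ≤ vol G S := by
  rw [cut, vol]
  apply Finset.sum_le_sum
  intro u _
  calc (∑ v ∈ Sᶜ, if G.Adj u v then (1:ℝ) else 0)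
      ≤ ∑ v, if G.Adj u v then (1:ℝ) else 0 := by
        apply Finset.sum_le_sum_of_subset_of_nonneg (Finset.subset_univ _)
        intro v _ _
        split <;> norm_num
    _ = (G.degree u : ℝ) := by
        rw [← adj_row_sum G u]
        apply Finset.sum_congr rfl
        intro v _
        rw [SimpleGraph.adjMatrix_apply]

lemma xind_dot_self (hdeg : ∀ v : V, 0 < G.degree v) (A : Finset V) :
    xind G A ⬝ᵥ xind G A = vol G A := by
  rw [dotProduct, vol]
  rw [← Finset.sum_subset (Finset.subset_univ A)
    (by intro v _ hv; rw [xind]; simp [hv])]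
  apply Finset.sum_congr rfl
  intro v hv
  rw [xind, if_pos hv, sd_mul_self G hdeg v]

end Stmt1Aux

set_option maxHeartbeats 2000000 in
open Stmt1Aux in
theorem stmt1 (G : SimpleGraph V) [DecidableRel G.Adj]
    (hdeg : ∀ v : V, 0 < G.degree v) (S : Finset V) (hS : S.Nonempty) (t : ℕ) :
    ∃ St : Finset V, St ⊆ S ∧ vol G S / 2 ≤ vol G St ∧
      ∀ v ∈ St, rem G v t S ≥ (1 / 200) * (1 - 3 * conduct G S / 2) ^ t := by
  classical
  have hvol : 0 < vol G S := vol_pos' G S hdeg hS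
  set θ : ℝ := 1 - 3 * conduct G S / 2 with hθdef
  by_cases hcut0 : cut G S = 0
  · -- closed set : rem = 1
    refine ⟨S, Finset.Subset.refl S, by linarith, ?_⟩
    intro v hv
    have h1 : rem G v t S = 1 := rem_eq_one_of_cut_zero G S hdeg hcut0 t v hv
    have h2 : conduct G S = 0 := by rw [conduct, hcut0, zero_div]
    rw [ge_iff_le, h1]
    rw [hθdef, h2]
    norm_num
  by_cases hθhalf : θ ≤ 1/2
  · -- trivial bound via laziness
    refine ⟨S, Finset.Subset.refl S, by linarith, ?_⟩
    intro v hv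
    have h1 : (2:ℝ)⁻¹ ^ t ≤ rem G v t S := rem_ge_half_pow G S t v hv
    have hφ1 : conduct G S ≤ 1 := by
      rw [conduct]
      exact div_le_one_of_le₀ (cut_le_vol' G S) (le_of_lt hvol)
    have hφ0 : 0 ≤ conduct G S := div_nonneg (cut_nonneg' G S) (le_of_lt hvol)
    have habs : |θ| ≤ 1/2 := abs_le.mpr ⟨by rw [hθdef]; linarith, hθhalf⟩
    rw [ge_iff_le]
    calc (1/200) * θ ^ t ≤ (1/200) * |θ| ^ t := by
          apply mul_le_mul_of_nonneg_left _ (by norm_num)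
          calc θ ^ t ≤ |θ ^ t| := le_abs_self _
            _ = |θ| ^ t := abs_pow θ t
      _ ≤ |θ| ^ t := by
          have := pow_nonneg (abs_nonneg θ) t
          linarith
      _ ≤ (1/2) ^ t := pow_le_pow_left₀ (abs_nonneg θ) habs t
      _ = (2:ℝ)⁻¹ ^ t := by norm_num
      _ ≤ rem G v t S := h1
  · -- main spectral case
    push_neg at hθhalf
    have hθpos : (0:ℝ) < θ := lt_trans (by norm_num) hθhalf
    have hθtpos : (0:ℝ) < θ ^ t := pow_pos hθpos t
    have hcutpos : 0 < cut G S := lt_of_le_of_ne (cut_nonneg' G S) (Ne.symm hcut0)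
    set τ : ℝ := (1/200) * θ ^ t with hτdef
    set St := S.filter (fun v => τ ≤ rem G v t S) with hSt
    set B := S.filter (fun v => ¬ τ ≤ rem G v t S) with hB
    refine ⟨St, Finset.filter_subset _ _, ?_, ?_⟩
    swap
    · intro v hv
      rw [ge_iff_le]
      exact (Finset.mem_filter.mp hv).2
    -- volume bound
    set x := xind G S with hx
    set xB := xind G B with hxB
    set xG := xind G St with hxG
    set H := Finset.univ.filter (fun i => θ ≤ ev G S i) with hH
    -- total mass
    have htotal : ∑ i, coeff G S x i ^ 2 = vol G S := by
      rw [← xind_dot_self G hdeg S, dot_eq_sum_coeff G S]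
      apply Finset.sum_congr rfl
      intro i _
      rw [sq]
    -- mean
    have hmean : ∑ i, ev G S i * coeff G S x i ^ 2 = vol G S - cut G S / 2 := by
      calc ∑ i, ev G S i * coeff G S x i ^ 2
          = ∑ i, ev G S i ^ 1 * (coeff G S x i * coeff G S x i) := by
            apply Finset.sum_congr rfl
            intro i _
            rw [pow_one, sq]
        _ = x ⬝ᵥ ((Wmat G S) ^ 1 *ᵥ x) := (dot_Wpow G S 1 x x).symm
        _ = vol G S - cut G S / 2 := by rw [pow_one, xS_dot_W_xS G S hdeg]
    -- low eigenvalue mass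
    have hlowsum : (1 - θ) * ∑ i ∈ Finset.univ.filter (fun i => ¬ θ ≤ ev G S i),
        coeff G S x i ^ 2 ≤ cut G S / 2 := by
      have h1 : ∑ i ∈ Finset.univ.filter (fun i => ¬ θ ≤ ev G S i),
          (1 - θ) * coeff G S x i ^ 2
          ≤ ∑ i ∈ Finset.univ.filter (fun i => ¬ θ ≤ ev G S i),
          (1 - ev G S i) * coeff G S x i ^ 2 := by
        apply Finset.sum_le_sum
        intro i hi
        have : ev G S i < θ := not_le.mp (Finset.mem_filter.mp hi).2
        nlinarith [sq_nonneg (coeff G S x i)]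
      have h2 : ∑ i ∈ Finset.univ.filter (fun i => ¬ θ ≤ ev G S i),
          (1 - ev G S i) * coeff G S x i ^ 2
          ≤ ∑ i, (1 - ev G S i) * coeff G S x i ^ 2 := by
        apply Finset.sum_le_sum_of_subset_of_nonneg (Finset.filter_subset _ _)
        intro i _ _
        have := ev_le_one G S hdeg i
        nlinarith [sq_nonneg (coeff G S x i)]
      have h3 : ∑ i, (1 - ev G S i) * coeff G S x i ^ 2 = cut G S / 2 := by
        have hsub : ∑ i, (1 - ev G S i) * coeff G S x i ^ 2
            = (∑ i, coeff G S x i ^ 2) - ∑ i, ev G S i * coeff G S x i ^ 2 := by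
          rw [← Finset.sum_sub_distrib]
          apply Finset.sum_congr rfl
          intro i _
          ring
        rw [hsub, htotal, hmean]
        ring
      calc (1 - θ) * ∑ i ∈ Finset.univ.filter (fun i => ¬ θ ≤ ev G S i), coeff G S x i ^ 2
          = ∑ i ∈ Finset.univ.filter (fun i => ¬ θ ≤ ev G S i), (1 - θ) * coeff G S x i ^ 2 :=
            Finset.mul_sum _ _ _
        _ ≤ cut G S / 2 := le_trans h1 (le_trans h2 (le_of_eq h3))
    have h1θ : 1 - θ = 3 * cut G S / (2 * vol G S) := by
      rw [hθdef, conduct]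
      field_simp
      ring
    have hlow : ∑ i ∈ Finset.univ.filter (fun i => ¬ θ ≤ ev G S i), coeff G S x i ^ 2
        ≤ vol G S / 3 := by
      have h1θpos : 0 < 1 - θ := by
        rw [h1θ]
        positivity
      rw [← mul_le_mul_iff_right₀ h1θpos]
      calc (1 - θ) * ∑ i ∈ Finset.univ.filter (fun i => ¬ θ ≤ ev G S i), coeff G S x i ^ 2
          ≤ cut G S / 2 := hlowsum
        _ = (1 - θ) * (vol G S / 3) := by
            rw [h1θ]
            field_simp
    have hhigh : 2 * vol G S / 3 ≤ ∑ i ∈ H, coeff G S x i ^ 2 := by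
      have hsplit := Finset.sum_filter_add_sum_filter_not Finset.univ
        (fun i => θ ≤ ev G S i) (fun i => coeff G S x i ^ 2)
      rw [hH]
      linarith [htotal, hlow, hsplit]
    -- B mass at high eigenvalues is small
    have hxBlex : ∀ v, xB v ≤ x v := by
      intro v
      rw [hxB, hx, xind, xind]
      by_cases hv : v ∈ B
      · rw [if_pos hv, if_pos (Finset.mem_filter.mp hv).1]
      · rw [if_neg hv]
        split
        · exact le_of_lt (sd_pos G hdeg v)
        · exact le_refl _
    have hxBnn : ∀ v, 0 ≤ xB v := by
      intro v
      rw [hxB, xind]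
      split
      · exact le_of_lt (sd_pos G hdeg v)
      · exact le_refl _
    have hstep1 : xB ⬝ᵥ ((Wmat G S) ^ t *ᵥ xB) ≤ xB ⬝ᵥ ((Wmat G S) ^ t *ᵥ x) := by
      apply Finset.sum_le_sum
      intro v _
      apply mul_le_mul_of_nonneg_left _ (hxBnn v)
      apply Finset.sum_le_sum
      intro u _
      exact mul_le_mul_of_nonneg_left (hxBlex u) (Wpow_nonneg G S hdeg t v u)
    have hstep2 : xB ⬝ᵥ ((Wmat G S) ^ t *ᵥ x) ≤ vol G S * τ := by
      have he : ∀ v, xB v * (((Wmat G S) ^ t) *ᵥ x) v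
          = xB v * (sd G v * rem G v t S) := by
        intro v
        rw [hx, Wpow_mulVec_x G S hdeg t v]
      calc xB ⬝ᵥ ((Wmat G S) ^ t *ᵥ x)
          = ∑ v, xB v * (sd G v * rem G v t S) := Finset.sum_congr rfl fun v _ => he v
        _ = ∑ v ∈ B, (G.degree v : ℝ) * rem G v t S := by
            rw [← Finset.sum_subset (Finset.subset_univ B)
              (by intro v _ hv; rw [hxB, xind, if_neg hv, zero_mul])]
            apply Finset.sum_congr rfl
            intro v hv
            rw [hxB, xind, if_pos hv, ← mul_assoc, sd_mul_self G hdeg v]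
        _ ≤ ∑ v ∈ B, (G.degree v : ℝ) * τ := by
            apply Finset.sum_le_sum
            intro v hv
            have hr : rem G v t S < τ := not_le.mp (Finset.mem_filter.mp hv).2
            exact mul_le_mul_of_nonneg_left (le_of_lt hr) (Nat.cast_nonneg _)
        _ = vol G B * τ := by rw [vol, Finset.sum_mul]
        _ ≤ vol G S * τ := by
            apply mul_le_mul_of_nonneg_right
              (vol_mono' G (Finset.filter_subset _ _)) _
            rw [hτdef]
            positivity
    have hBspec : ∑ i, ev G S i ^ t * coeff G S xB i ^ 2 ≤ vol G S * τ := by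
      have h := dot_Wpow G S t xB xB
      have h2 : ∑ i, ev G S i ^ t * (coeff G S xB i * coeff G S xB i)
          = ∑ i, ev G S i ^ t * coeff G S xB i ^ 2 := by
        apply Finset.sum_congr rfl
        intro i _
        rw [sq]
      linarith [hstep1, hstep2, h.symm.le, h.le]
    have hPB : ∑ i ∈ H, coeff G S xB i ^ 2 ≤ vol G S / 200 := by
      have hθt : θ ^ t * ∑ i ∈ H, coeff G S xB i ^ 2
          ≤ ∑ i ∈ H, ev G S i ^ t * coeff G S xB i ^ 2 := by
        rw [Finset.mul_sum]
        apply Finset.sum_le_sum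
        intro i hi
        have hev : θ ≤ ev G S i := (Finset.mem_filter.mp hi).2
        have : θ ^ t ≤ ev G S i ^ t := pow_le_pow_left₀ (le_of_lt hθpos) hev t
        nlinarith [sq_nonneg (coeff G S xB i)]
      have hsub : ∑ i ∈ H, ev G S i ^ t * coeff G S xB i ^ 2
          ≤ ∑ i, ev G S i ^ t * coeff G S xB i ^ 2 := by
        apply Finset.sum_le_sum_of_subset_of_nonneg (Finset.filter_subset _ _)
        intro i _ _
        have := ev_nonneg G S hdeg i
        positivity
      have hchain : θ ^ t * ∑ i ∈ H, coeff G S xB i ^ 2 ≤ vol G S * ((1/200) * θ ^ t) := by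
        rw [← hτdef]
        linarith
      have := (mul_le_mul_iff_right₀ hθtpos).mp (by linarith [hchain] : θ ^ t * ∑ i ∈ H, coeff G S xB i ^ 2 ≤ θ ^ t * (vol G S / 200))
      exact this
    -- partition and coefficients
    have hpart : ∀ v, xG v = x v - xB v := by
      intro v
      rw [hxG, hxB, hx]
      show xind G St v = xind G S v - xind G B v
      rw [xind, xind, xind]
      by_cases hv : v ∈ S
      · by_cases hr : τ ≤ rem G v t S
        · have h1 : v ∈ St := Finset.mem_filter.mpr ⟨hv, hr⟩
          have h2 : v ∉ B := fun hh => (Finset.mem_filter.mp hh).2 hr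
          rw [if_pos h1, if_pos hv, if_neg h2]
          ring
        · have h1 : v ∉ St := fun hh => hr (Finset.mem_filter.mp hh).2
          have h2 : v ∈ B := Finset.mem_filter.mpr ⟨hv, hr⟩
          rw [if_neg h1, if_pos hv, if_pos h2]
          ring
      · have h1 : v ∉ St := fun hh => hv (Finset.filter_subset _ _ hh)
        have h2 : v ∉ B := fun hh => hv (Finset.filter_subset _ _ hh)
        rw [if_neg h1, if_neg hv, if_neg h2]
        ring
    have hcoeffG : ∀ i, coeff G S xG i = coeff G S x i - coeff G S xB i := by
      intro i
      rw [coeff, coeff, coeff, ← Finset.sum_sub_distrib]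
      apply Finset.sum_congr rfl
      intro v _
      rw [hpart v]
      ring
    have hvolG : vol G St = ∑ i, coeff G S xG i ^ 2 := by
      rw [← xind_dot_self G hdeg St, dot_eq_sum_coeff G S]
      exact Finset.sum_congr rfl fun i _ => (sq _).symm
    -- Cauchy-Schwarz and conclusion
    set A1 := ∑ i ∈ H, coeff G S x i ^ 2 with hA1
    set B1 := ∑ i ∈ H, coeff G S xB i ^ 2 with hB1
    set C1 := ∑ i ∈ H, coeff G S x i * coeff G S xB i with hC1
    have hA1le : A1 ≤ vol G S := by
      rw [hA1, ← htotal]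
      apply Finset.sum_le_sum_of_subset_of_nonneg (Finset.filter_subset _ _)
      intro i _ _
      positivity
    have hB1nn : 0 ≤ B1 := by
      rw [hB1]
      positivity
    have hCS : C1 ^ 2 ≤ A1 * B1 := by
      rw [hA1, hB1, hC1]
      exact Finset.sum_mul_sq_le_sq_mul_sq H _ _
    have hexpand : ∑ i ∈ H, (coeff G S x i - coeff G S xB i) ^ 2 = A1 - 2 * C1 + B1 := by
      rw [hA1, hB1, hC1]
      rw [Finset.mul_sum]
      rw [← Finset.sum_sub_distrib, ← Finset.sum_add_distrib]
      apply Finset.sum_congr rfl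
      intro i _
      ring
    clear_value A1 B1 C1
    have hC1le : C1 ≤ vol G S / 12 := by
      have hv2 : (0:ℝ) ≤ (vol G S) ^ 2 := sq_nonneg _
      have h1 : C1 ^ 2 ≤ (vol G S / 12) ^ 2 := by
        calc C1 ^ 2 ≤ A1 * B1 := hCS
          _ ≤ vol G S * (vol G S / 200) := mul_le_mul hA1le hPB hB1nn (le_of_lt hvol)
          _ = (vol G S) ^ 2 * (1/200) := by ring
          _ ≤ (vol G S) ^ 2 * (1/144) := by
              apply mul_le_mul_of_nonneg_left (by norm_num) hv2
          _ = (vol G S / 12) ^ 2 := by ring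
      exact le_trans (le_abs_self C1) (abs_le_of_sq_le_sq h1 (by positivity))
    have hlower : ∑ i ∈ H, (coeff G S x i - coeff G S xB i) ^ 2 ≤ vol G St := by
      rw [hvolG]
      calc ∑ i ∈ H, (coeff G S x i - coeff G S xB i) ^ 2
          = ∑ i ∈ H, coeff G S xG i ^ 2 := by
            apply Finset.sum_congr rfl
            intro i _
            rw [hcoeffG i]
        _ ≤ ∑ i, coeff G S xG i ^ 2 := by
            apply Finset.sum_le_sum_of_subset_of_nonneg (Finset.filter_subset _ _)
            intro i _ _
            positivity
    linarith only [hexpand, hlower, hhigh, hC1le, hB1nn]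
end

section
/- Let A be a symmetric matrix with nonnegative real entries indexed by a finite set V, with all weighted degrees d(v) := Σ_u A(v,u) positive, let W := D⁻¹A, and let S ⊆ V be nonempty. Then for every integer t ≥ 1, π_S' (I_S W I_S)^{2t} 1_S ≥ (1 − φ(S))^{2t}. -/
open Matrix Finset

variable {V : Type*} [Fintype V] [DecidableEq V]

/-- Weighted degree `d(v) = ∑ u, A v u`. -/
noncomputable def wdeg (A : Matrix V V ℝ) (v : V) : ℝ := ∑ u, A v u

/-- Weighted volume of a set of vertices. -/
noncomputable def wvol (A : Matrix V V ℝ) (S : Finset V) : ℝ := ∑ v ∈ S, wdeg A v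

/-- Weighted size of the boundary of `S`. -/
noncomputable def wcut (A : Matrix V V ℝ) (S : Finset V) : ℝ := ∑ u ∈ S, ∑ v ∈ Sᶜ, A u v

/-- Weighted conductance of `S`. -/
noncomputable def wcond (A : Matrix V V ℝ) (S : Finset V) : ℝ := wcut A S / wvol A S

/-- Random walk transition matrix `W = D⁻¹ A`. -/
noncomputable def walk (A : Matrix V V ℝ) : Matrix V V ℝ :=
  Matrix.diagonal (fun v => (wdeg A v)⁻¹) * A

/-- The distribution `π_S` proportional to weighted degrees on `S`. -/
noncomputable def wpi (A : Matrix V V ℝ) (S : Finset V) : V → ℝ :=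
  fun v => if v ∈ S then wdeg A v / wvol A S else 0


/-- Weighted bilinear form. -/
noncomputable def Bf (d u w : V → ℝ) : ℝ := ∑ v, d v * u v * w v

lemma Bf_nonneg (d : V → ℝ) (hd : ∀ v, 0 ≤ d v) (u : V → ℝ) : 0 ≤ Bf d u u := by
  apply Finset.sum_nonneg; intro v _
  have : d v * u v * u v = d v * (u v * u v) := by ring
  rw [this]; exact mul_nonneg (hd v) (mul_self_nonneg _)

lemma Bf_cs (d : V → ℝ) (hd : ∀ v, 0 ≤ d v) (u w : V → ℝ) :
    (Bf d u w) ^ 2 ≤ Bf d u u * Bf d w w := by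
  have h := Finset.sum_mul_sq_le_sq_mul_sq Finset.univ
    (fun v => Real.sqrt (d v) * u v) (fun v => Real.sqrt (d v) * w v)
  have e1 : ∑ v, (Real.sqrt (d v) * u v) * (Real.sqrt (d v) * w v) = Bf d u w := by
    apply Finset.sum_congr rfl; intro v _
    have : (Real.sqrt (d v) * u v) * (Real.sqrt (d v) * w v)
        = (Real.sqrt (d v) * Real.sqrt (d v)) * u v * w v := by ring
    rw [this, Real.mul_self_sqrt (hd v)]
  have e2 : ∀ y : V → ℝ, ∑ v, (Real.sqrt (d v) * y v) ^ 2 = Bf d y y := by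
    intro y; apply Finset.sum_congr rfl; intro v _
    have : (Real.sqrt (d v) * y v) ^ 2 = (Real.sqrt (d v) * Real.sqrt (d v)) * y v * y v := by ring
    rw [this, Real.mul_self_sqrt (hd v)]
  rw [e1, e2, e2] at h
  exact h

lemma Bf_adj (d : V → ℝ) (M : Matrix V V ℝ) (hM : ∀ u v, d u * M u v = d v * M v u)
    (u w : V → ℝ) : Bf d u (M.mulVec w) = Bf d (M.mulVec u) w := by
  unfold Bf Matrix.mulVec dotProduct
  simp only [Finset.mul_sum, Finset.sum_mul]
  rw [Finset.sum_comm]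
  apply Finset.sum_congr rfl; intro v _
  apply Finset.sum_congr rfl; intro v' _
  linear_combination (u v' * w v) * hM v' v

lemma Bf_key (d : V → ℝ) (hd : ∀ v, 0 ≤ d v) (M : Matrix V V ℝ)
    (hM : ∀ u v, d u * M u v = d v * M v u) (x : V → ℝ) (t : ℕ) :
    (Bf d x (M.mulVec x)) ^ (2 * t) * Bf d x x ≤
      (Bf d x x) ^ (2 * t) * Bf d x ((M ^ (2 * t)).mulVec x) := by
  set g : ℕ → (V → ℝ) := fun k => (M ^ k).mulVec x with hg
  have hg0 : g 0 = x := by simp [hg]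
  have hgs : ∀ k, g (k + 1) = M.mulVec (g k) := by
    intro k
    simp [hg, pow_succ', ← Matrix.mulVec_mulVec]
  set c : ℕ → ℝ := fun k => Bf d (g k) (g k) with hc
  have hcnn : ∀ k, 0 ≤ c k := fun k => Bf_nonneg d hd _
  -- shift lemma
  have shift : ∀ n i j, Bf d (g i) (g (j + n)) = Bf d (g (i + n)) (g j) := by
    intro n
    induction n with
    | zero => intro i j; rfl
    | succ n ih =>
      intro i j
      have h1 : j + (n + 1) = (j + 1) + n := by omega
      rw [h1, ih i (j + 1), hgs j, Bf_adj d M hM, ← hgs (i + n)]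
      rfl
  -- c (k+1) = Bf (g k) (g (k+2))
  have cmid : ∀ k, c (k + 1) = Bf d (g k) (g (k + 2)) := by
    intro k
    have := shift 1 k (k + 1)
    simpa using this.symm
  -- log-convexity
  have clc : ∀ k, c (k + 1) ^ 2 ≤ c k * c (k + 2) := by
    intro k
    rw [cmid k]
    exact Bf_cs d hd _ _
  -- ratio monotone: c 1 * c k ≤ c 0 * c (k+1)
  have Q : ∀ k, c 1 * c k ≤ c 0 * c (k + 1) := by
    intro k
    induction k with
    | zero => rw [mul_comm]
    | succ k ih =>
      rcases eq_or_lt_of_le (hcnn (k + 1)) with h | h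
      · rw [← h, mul_zero]
        exact mul_nonneg (hcnn 0) (hcnn (k + 2))
      · have h1 : c 1 * (c (k + 1) * c (k + 1)) ≤ c 1 * (c k * c (k + 2)) := by
          apply mul_le_mul_of_nonneg_left _ (hcnn 1)
          have := clc k; nlinarith [hcnn (k+1)]
        have h2 : c 1 * c k * c (k + 2) ≤ c 0 * c (k + 1) * c (k + 2) :=
          mul_le_mul_of_nonneg_right ih (hcnn (k + 2))
        have h3 : c 1 * c (k + 1) * c (k + 1) ≤ c 0 * c (k + 2) * c (k + 1) := by
          nlinarith
        exact le_of_mul_le_mul_right h3 h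
  -- power inequality: c 1 ^ k * c 0 ≤ c 0 ^ k * c k
  have P : ∀ k, c 1 ^ k * c 0 ≤ c 0 ^ k * c k := by
    intro k
    induction k with
    | zero => simp
    | succ k ih =>
      calc c 1 ^ (k + 1) * c 0 = c 1 * (c 1 ^ k * c 0) := by ring
        _ ≤ c 1 * (c 0 ^ k * c k) := mul_le_mul_of_nonneg_left ih (hcnn 1)
        _ = c 0 ^ k * (c 1 * c k) := by ring
        _ ≤ c 0 ^ k * (c 0 * c (k + 1)) :=
            mul_le_mul_of_nonneg_left (Q k) (pow_nonneg (hcnn 0) k)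
        _ = c 0 ^ (k + 1) * c (k + 1) := by ring
  -- a1² ≤ c 0 * c 1
  have ha1 : (Bf d x (M.mulVec x)) ^ 2 ≤ c 0 * c 1 := by
    have := Bf_cs d hd x (M.mulVec x)
    rw [hc]
    simp only [hg0]
    rw [hgs 0, hg0]
    exact this
  -- assemble
  have hfin : (Bf d x (M.mulVec x)) ^ (2 * t) * c 0 ≤ c 0 ^ (2 * t) * c t := by
    calc (Bf d x (M.mulVec x)) ^ (2 * t) * c 0
        = ((Bf d x (M.mulVec x)) ^ 2) ^ t * c 0 := by rw [← pow_mul]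
      _ ≤ (c 0 * c 1) ^ t * c 0 := by
          apply mul_le_mul_of_nonneg_right _ (hcnn 0)
          exact pow_le_pow_left₀ (sq_nonneg _) ha1 t
      _ = c 0 ^ t * (c 1 ^ t * c 0) := by rw [mul_pow]; ring
      _ ≤ c 0 ^ t * (c 0 ^ t * c t) := mul_le_mul_of_nonneg_left (P t) (pow_nonneg (hcnn 0) t)
      _ = c 0 ^ (2 * t) * c t := by rw [two_mul, pow_add]; ring
  have hc0 : c 0 = Bf d x x := by rw [hc]; simp only [hg0]
  have hct : c t = Bf d x ((M ^ (2 * t)).mulVec x) := by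
    have h := shift t 0 t
    rw [zero_add, hg0] at h
    have h2 : g (t + t) = (M ^ (2 * t)).mulVec x := by rw [two_mul, hg]
    rw [h2] at h
    exact h.symm
  rw [hc0, hct] at hfin
  exact hfin

theorem stmt12 (A : Matrix V V ℝ) (hsym : A.IsSymm) (hnn : ∀ u v, 0 ≤ A u v)
    (hd : ∀ v, 0 < wdeg A v) (S : Finset V) (hS : S.Nonempty) (t : ℕ) (ht : 1 ≤ t) :
    wpi A S ⬝ᵥ ((indMat S * walk A * indMat S) ^ (2 * t)).mulVec (indVec S) ≥
      (1 - wcond A S) ^ (2 * t) := by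
  set d : V → ℝ := wdeg A with hdd
  set M : Matrix V V ℝ := indMat S * walk A * indMat S with hMM
  set x : V → ℝ := indVec S with hx
  have hdnn : ∀ v, 0 ≤ d v := fun v => (hd v).le
  have hμ : 0 < wvol A S := Finset.sum_pos (fun v _ => hd v) hS
  -- entry formula for M
  have hMentry : ∀ u v, M u v =
      (if u ∈ S then (1:ℝ) else 0) * ((d u)⁻¹ * A u v) * (if v ∈ S then (1:ℝ) else 0) := by
    intro u v
    rw [hMM]
    simp [indMat, walk, Matrix.mul_apply, Matrix.diagonal, Finset.sum_ite_eq,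
      Finset.sum_ite_eq', mul_assoc]
    rfl
  -- D-self-adjointness
  have hM : ∀ u v, d u * M u v = d v * M v u := by
    intro u v
    rw [hMentry u v, hMentry v u]
    have h1 : d u * ((d u)⁻¹) = 1 := mul_inv_cancel₀ (hd u).ne'
    have h2 : d v * ((d v)⁻¹) = 1 := mul_inv_cancel₀ (hd v).ne'
    have h3 : A u v = A v u := (hsym.apply v u)
    calc d u * ((if u ∈ S then (1:ℝ) else 0) * ((d u)⁻¹ * A u v) * (if v ∈ S then (1:ℝ) else 0))
        = (d u * (d u)⁻¹) * ((if u ∈ S then (1:ℝ) else 0) * A u v * (if v ∈ S then (1:ℝ) else 0)) := by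
          ring
      _ = (d v * (d v)⁻¹) * ((if v ∈ S then (1:ℝ) else 0) * A v u * (if u ∈ S then (1:ℝ) else 0)) := by
          rw [h1, h2, h3]; ring
      _ = d v * ((if v ∈ S then (1:ℝ) else 0) * ((d v)⁻¹ * A v u) * (if u ∈ S then (1:ℝ) else 0)) := by
          ring
  -- Bf d x x = wvol
  have hBxx : Bf d x x = wvol A S := by
    rw [Bf, wvol]
    rw [← Finset.sum_filter_add_sum_filter_not Finset.univ (· ∈ S)]
    have h1 : ∑ v ∈ Finset.univ.filter (· ∈ S), d v * x v * x v
        = ∑ v ∈ Finset.univ.filter (· ∈ S), d v := by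
      apply Finset.sum_congr rfl; intro v hv
      simp only [Finset.mem_filter] at hv
      simp [hx, indVec, hv.2]
    have h2 : ∑ v ∈ Finset.univ.filter (¬ · ∈ S), d v * x v * x v = 0 := by
      apply Finset.sum_eq_zero; intro v hv
      simp only [Finset.mem_filter] at hv
      simp [hx, indVec, hv.2]
    rw [h1, h2, add_zero]
    apply Finset.sum_congr _ (fun _ _ => rfl)
    ext v; simp
  -- Bf d x (M x) = wvol - wcut
  have hBxMx : Bf d x (M.mulVec x) = wvol A S - wcut A S := by
    have hrow : ∀ v ∈ S, d v * (M.mulVec x) v = ∑ u ∈ S, A v u := by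
      intro v hv
      rw [Matrix.mulVec, dotProduct, Finset.mul_sum]
      rw [← Finset.sum_filter_add_sum_filter_not Finset.univ (· ∈ S)]
      have h2 : ∑ u ∈ Finset.univ.filter (¬ · ∈ S), d v * (M v u * x u) = 0 := by
        apply Finset.sum_eq_zero; intro u hu
        simp only [Finset.mem_filter] at hu
        simp [hx, indVec, hu.2]
      have h1 : ∑ u ∈ Finset.univ.filter (· ∈ S), d v * (M v u * x u)
          = ∑ u ∈ Finset.univ.filter (· ∈ S), A v u := by
        apply Finset.sum_congr rfl; intro u hu
        simp only [Finset.mem_filter] at hu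
        rw [hMentry v u]
        simp only [hx, indVec, if_pos hv, if_pos hu.2]
        field_simp
        exact mul_div_cancel_left₀ _ (hd v).ne'
      rw [h1, h2, add_zero]
      apply Finset.sum_congr _ (fun _ _ => rfl)
      ext u; simp
    have hsplit : ∀ v, ∑ u ∈ S, A v u = d v - ∑ u ∈ Sᶜ, A v u := by
      intro v
      have := Finset.sum_add_sum_compl S (fun u => A v u)
      rw [hdd, wdeg]
      linarith
    have hx0 : ∀ v, v ∉ S → d v * x v * (M.mulVec x) v = 0 := by
      intro v hv; simp [hx, indVec, hv]
    rw [Bf]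
    rw [← Finset.sum_filter_add_sum_filter_not Finset.univ (· ∈ S)]
    have h2 : ∑ v ∈ Finset.univ.filter (¬ · ∈ S), d v * x v * (M.mulVec x) v = 0 := by
      apply Finset.sum_eq_zero; intro v hv
      simp only [Finset.mem_filter] at hv
      exact hx0 v hv.2
    rw [h2, add_zero]
    have hfS : Finset.univ.filter (· ∈ S) = S := by ext v; simp
    rw [hfS]
    have h1 : ∑ v ∈ S, d v * x v * (M.mulVec x) v = ∑ v ∈ S, (d v - ∑ u ∈ Sᶜ, A v u) := by
      apply Finset.sum_congr rfl; intro v hv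
      rw [show d v * x v * (M.mulVec x) v = d v * (M.mulVec x) v by
        simp [hx, indVec, hv]]
      rw [hrow v hv, hsplit v]
    rw [h1, Finset.sum_sub_distrib]
    rw [wvol, wcut, hdd]
  -- LHS as Bf
  have hLHS : wpi A S ⬝ᵥ (M ^ (2 * t)).mulVec x
      = Bf d x ((M ^ (2 * t)).mulVec x) / wvol A S := by
    rw [dotProduct, Bf, Finset.sum_div]
    apply Finset.sum_congr rfl; intro v _
    by_cases hv : v ∈ S
    · simp [wpi, hx, indVec, hv]; ring
    · simp [wpi, hx, indVec, hv]
  rw [hLHS, ge_iff_le]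
  -- RHS rewrite
  have hRHS : (1 - wcond A S) = (wvol A S - wcut A S) / wvol A S := by
    rw [wcond]; field_simp
  rw [hRHS, div_pow, div_le_div_iff₀ (pow_pos hμ _) hμ]
  have key := Bf_key d hdnn M hM x t
  rw [hBxx, hBxMx] at key
  calc (wvol A S - wcut A S) ^ (2 * t) * wvol A S
      ≤ wvol A S ^ (2 * t) * Bf d x ((M ^ (2 * t)).mulVec x) := key
    _ = Bf d x ((M ^ (2 * t)).mulVec x) * wvol A S ^ (2 * t) := by ring
end
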